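/- Let d > 1 be an integer, let f(z) = z^d, and let a ∈ ℂ \ {0}. Then for every C², compactly supported function φ : ℂ → ℝ there is a constant C > 0 such that for all n ≥ 1, |(d^n−1)^{-1}·Σ_{w} φ(w) − (2π)^{-1}·∫_0^{2π} φ(e^{it}) dt| ≤ C·n·d^{-n}, where the sum ranges over the d^n−1 (simple) roots w ∈ ℂ of the equation (f^n)'(w) = d^n·w^{d^n−1} = a. That is, the averaged pullbacks (d^n−1)^{-1}·((f^n)')^*δ_a converge to the normalized Lebesgue measure on the unit circle at rate O(n·d^{-n}) against C² test functions. -/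

import Mathlib

open Polynomial MeasureTheory Filter

/-- The Laplacian `Δφ = ∂²φ/∂x² + ∂²φ/∂y²` of a function `φ : ℂ → ℝ`. -/
noncomputable def lap (φ : ℂ → ℝ) (z : ℂ) : ℝ :=
  iteratedFDeriv ℝ 2 φ z ![1, 1] + iteratedFDeriv ℝ 2 φ z ![Complex.I, Complex.I]

lemma circ_lip (s t : ℝ) :
    ‖Complex.exp (Complex.I * s) - Complex.exp (Complex.I * t)‖ ≤ |s - t| := by
  have h := (lipschitzWith_circleMap 0 1).dist_le_mul s t
  simp only [circleMap, zero_add, one_mul, Complex.dist_eq, Real.dist_eq] at h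
  simpa [mul_comm, map_one] using h

lemma riemann_bound (g : ℝ → ℝ) (L : ℝ) (hL : 0 ≤ L) (hgc : Continuous g)
    (hg : ∀ s t, |g s - g t| ≤ L * |s - t|)
    (hper : Function.Periodic g (2 * Real.pi)) (θ0 : ℝ) (m : ℕ) (hm : 0 < m) :
    |(∑ k ∈ Finset.range m, g (θ0 + 2 * Real.pi * k / m)) / m -
      (2 * Real.pi)⁻¹ * ∫ t in (0:ℝ)..(2 * Real.pi), g t| ≤ 2 * Real.pi * L / m := by
  have hπ : (0:ℝ) < 2 * Real.pi := by positivity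
  have hm' : (0:ℝ) < m := by exact_mod_cast hm
  set x : ℕ → ℝ := fun k => θ0 + 2 * Real.pi * k / m with hx
  clear_value x
  have hint : ∀ a b : ℝ, IntervalIntegrable g volume a b := fun a b =>
    hgc.intervalIntegrable a b
  have h1 : (∫ t in (0:ℝ)..(2 * Real.pi), g t) = ∫ t in (x 0)..(x m), g t := by
    have := hper.intervalIntegral_add_eq 0 θ0
    rw [zero_add] at this
    rw [this]
    congr 1
    · simp [hx]
    · rw [hx]; field_simp
  have h2 : (∫ t in (x 0)..(x m), g t) = ∑ k ∈ Finset.range m, ∫ t in (x k)..(x (k+1)), g t :=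
    (intervalIntegral.sum_integral_adjacent_intervals (fun k _ => hint _ _)).symm
  have hstep : ∀ k : ℕ, x (k+1) - x k = 2 * Real.pi / m := by
    intro k; rw [hx]; push_cast; field_simp; ring
  have hstep' : (0:ℝ) < 2 * Real.pi / m := div_pos hπ hm'
  have key : ∀ k : ℕ, |(2 * Real.pi / m) * g (x k) - ∫ t in (x k)..(x (k+1)), g t|
      ≤ (L * (2 * Real.pi / m)) * (2 * Real.pi / m) := by
    intro k
    have hxlt : x k ≤ x (k+1) := by have := hstep k; linarith
    have hconst : (∫ _ in (x k)..(x (k+1)), g (x k)) = (2 * Real.pi / m) * g (x k) := by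
      rw [intervalIntegral.integral_const, hstep k, smul_eq_mul]
    rw [← hconst, ← intervalIntegral.integral_sub (intervalIntegrable_const) (hint _ _)]
    have hbd : ∀ t ∈ Set.uIoc (x k) (x (k+1)), ‖g (x k) - g t‖ ≤ L * (2 * Real.pi / m) := by
      intro t ht
      rw [Set.uIoc_of_le hxlt] at ht
      have h1 : x k < t := ht.1
      have h2 : t ≤ x (k+1) := ht.2
      have habs : |x k - t| ≤ 2 * Real.pi / m := by
        rw [abs_sub_comm, abs_of_pos (by linarith)]
        have := hstep k; linarith
      calc ‖g (x k) - g t‖ = |g (x k) - g t| := rfl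
        _ ≤ L * |x k - t| := hg _ _
        _ ≤ L * (2 * Real.pi / m) := by nlinarith
    have := intervalIntegral.norm_integral_le_of_norm_le_const hbd
    rw [hstep k] at this
    calc |∫ t in (x k)..(x (k+1)), (g (x k) - g t)| ≤ L * (2 * Real.pi / m) * |2 * Real.pi / m| :=
      this
      _ = L * (2 * Real.pi / m) * (2 * Real.pi / m) := by rw [abs_of_pos hstep']
  have e1 : (∑ k ∈ Finset.range m, g (x k)) / m -
      (2 * Real.pi)⁻¹ * ∫ t in (0:ℝ)..(2 * Real.pi), g t =
      (2 * Real.pi)⁻¹ * (∑ k ∈ Finset.range m,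
        ((2 * Real.pi / m) * g (x k) - ∫ t in (x k)..(x (k+1)), g t)) := by
    rw [h1, h2, Finset.sum_sub_distrib, ← Finset.mul_sum]
    field_simp
  have hsum : (∑ k ∈ Finset.range m, g (θ0 + 2 * Real.pi * k / m))
      = ∑ k ∈ Finset.range m, g (x k) := by rw [hx]
  rw [hsum, e1, abs_mul, abs_of_pos (by positivity : (0:ℝ) < (2 * Real.pi)⁻¹)]
  calc (2 * Real.pi)⁻¹ * |∑ k ∈ Finset.range m,
        ((2 * Real.pi / m) * g (x k) - ∫ t in (x k)..(x (k+1)), g t)|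
      ≤ (2 * Real.pi)⁻¹ * ∑ k ∈ Finset.range m,
        |(2 * Real.pi / m) * g (x k) - ∫ t in (x k)..(x (k+1)), g t| := by
        gcongr
        exact Finset.abs_sum_le_sum_abs _ _
    _ ≤ (2 * Real.pi)⁻¹ * ∑ k ∈ Finset.range m, (L * (2 * Real.pi / m)) * (2 * Real.pi / m) := by
        gcongr with k hk
        exact key k
    _ = 2 * Real.pi * L / m := by
        rw [Finset.sum_const, Finset.card_range, nsmul_eq_mul]
        field_simp

/-- Explicit description of the roots. -/
lemma roots_eq (m : ℕ) (hm : 0 < m) (c a : ℂ) (hc : c ≠ 0) (ha : a ≠ 0) :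
    (Polynomial.C c * Polynomial.X ^ m - Polynomial.C a).roots =
      (Multiset.range m).map
        (fun k => Complex.exp (2 * Real.pi * Complex.I / m) ^ k *
          Complex.exp (Complex.log (a / c) / m)) := by
  have hb : a / c ≠ 0 := div_ne_zero ha hc
  have hfac : Polynomial.C c * Polynomial.X ^ m - Polynomial.C a =
      Polynomial.C c * (Polynomial.X ^ m - Polynomial.C (a / c)) := by
    rw [mul_sub, ← Polynomial.C_mul, mul_div_cancel₀ a hc]
  rw [hfac, Polynomial.roots_C_mul _ hc]
  have hα : (Complex.exp (Complex.log (a / c) / m)) ^ m = a / c := by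
    rw [← Complex.exp_nat_mul, mul_div_cancel₀ _ (by exact_mod_cast hm.ne' : (m:ℂ) ≠ 0),
      Complex.exp_log hb]
  have := (Complex.isPrimitiveRoot_exp m hm.ne').nthRoots_eq hα
  rw [← Polynomial.nthRoots, this]

lemma point_eq (p q : ℝ) (m k : ℕ) (hm : (m:ℂ) ≠ 0) :
    Complex.exp (2 * Real.pi * Complex.I / m) ^ k *
      Complex.exp (((p : ℂ) + (q : ℂ) * Complex.I) / m) =
    ((Real.exp (p / m) : ℝ) : ℂ) *
      Complex.exp (Complex.I * (((q / (m:ℝ) : ℝ) : ℂ) + 2 * Real.pi * k / m)) := by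
  rw [← Complex.exp_nat_mul, Complex.ofReal_exp, ← Complex.exp_add, ← Complex.exp_add]
  congr 1
  push_cast
  field_simp
  ring

set_option maxHeartbeats 1600000 in
theorem stmt16 (d : ℕ) (hd : 1 < d) (a : ℂ) (ha : a ≠ 0)
    (φ : ℂ → ℝ) (hφ : ContDiff ℝ 2 φ) (hsupp : HasCompactSupport φ) :
    ∃ C : ℝ, 0 < C ∧ ∀ n : ℕ, 1 ≤ n →
      |(((Polynomial.C ((d : ℂ) ^ n) * Polynomial.X ^ (d ^ n - 1) - Polynomial.C a).roots).map
          (fun w => φ w)).sum / ((d : ℝ) ^ n - 1) -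
        (2 * Real.pi)⁻¹ * ∫ t in (0 : ℝ)..(2 * Real.pi), φ (Complex.exp (Complex.I * t))| ≤
      C * n / (d : ℝ) ^ n := by
  obtain ⟨K, hK⟩ := hφ.lipschitzWith_of_hasCompactSupport hsupp (by norm_num)
  set L : ℝ := (K : ℝ) with hLdef
  have hL0 : 0 ≤ L := K.coe_nonneg
  have hLip : ∀ z w : ℂ, |φ z - φ w| ≤ L * ‖z - w‖ := by
    intro z w
    have := hK.dist_le_mul z w
    rwa [Real.dist_eq, Complex.dist_eq] at this
  clear_value L
  set K0 : ℝ := |Real.log (‖a‖)| + Real.log d with hK0def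
  have hlogd : 0 < Real.log d := Real.log_pos (by exact_mod_cast hd)
  have hK0 : 0 < K0 := by positivity
  clear_value K0
  refine ⟨2 * (L + 1) * (Real.exp K0 * K0 + 2 * Real.pi), by positivity, ?_⟩
  intro n hn
  set m : ℕ := d ^ n - 1 with hmdef
  have hdn : 1 < d ^ n := Nat.one_lt_pow (by omega) hd
  have hm : 0 < m := by omega
  have hm' : (0:ℝ) < m := by exact_mod_cast hm
  have hmC : (m:ℂ) ≠ 0 := by exact_mod_cast hm.ne'
  clear_value m
  have hdnR : (0:ℝ) < (d:ℝ) ^ n := by positivity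
  have hdn2R : (2:ℝ) ≤ (d:ℝ) ^ n := by exact_mod_cast hdn
  have hcastm : ((d:ℝ) ^ n - 1) = (m : ℝ) := by
    rw [hmdef]
    push_cast [Nat.cast_sub hdn.le]
    ring
  have hc : ((d:ℂ) ^ n) ≠ 0 :=
    pow_ne_zero _ (Nat.cast_ne_zero.mpr (by omega))
  set b : ℂ := a / ((d:ℂ) ^ n) with hbdef
  have hb : b ≠ 0 := div_ne_zero ha hc
  clear_value b
  set p : ℝ := (Complex.log b).re with hpdef
  set q : ℝ := (Complex.log b).im with hqdef
  have hlb : Complex.log b = (p : ℂ) + (q : ℂ) * Complex.I := (Complex.re_add_im _).symm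
  clear_value p q
  set r : ℝ := Real.exp (p / m) with hrdef
  have hr0 : 0 < r := Real.exp_pos _
  clear_value r
  set θ0 : ℝ := q / m with hθ0def
  clear_value θ0
  set g : ℝ → ℝ := fun t => φ (Complex.exp (Complex.I * t)) with hgdef
  -- the sum over roots
  have hroots := roots_eq m hm ((d:ℂ) ^ n) a hc ha
  have hpoint : ∀ k : ℕ, Complex.exp (2 * Real.pi * Complex.I / m) ^ k *
      Complex.exp (Complex.log (a / ((d:ℂ) ^ n)) / m) =
      (r : ℂ) * Complex.exp (Complex.I * (θ0 + 2 * Real.pi * k / m)) := by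
    intro k
    rw [← hbdef, hlb, hrdef, hθ0def]
    exact point_eq p q m k hmC
  have hsum : (((Polynomial.C ((d : ℂ) ^ n) * Polynomial.X ^ m -
      Polynomial.C a).roots).map (fun w => φ w)).sum =
      ∑ k ∈ Finset.range m, φ ((r : ℂ) * Complex.exp (Complex.I * (θ0 + 2 * Real.pi * k / m))) := by
    rw [hroots, Multiset.map_map, Finset.sum_eq_multiset_sum, Finset.range_val]
    apply congrArg
    apply Multiset.map_congr rfl
    intro k _
    simp only [Function.comp_apply]
    rw [hpoint k]
  -- Lipschitz and periodicity of g
  have hgLip : ∀ s t : ℝ, |g s - g t| ≤ L * |s - t| := by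
    intro s t
    calc |g s - g t|
        ≤ L * ‖Complex.exp (Complex.I * s) - Complex.exp (Complex.I * t)‖ := hLip _ _
      _ ≤ L * |s - t| := by nlinarith [circ_lip s t, hL0]
  have hgc : Continuous g :=
    hφ.continuous.comp (Complex.continuous_exp.comp
      (continuous_const.mul Complex.continuous_ofReal))
  have hper : Function.Periodic g (2 * Real.pi) := by
    intro t
    simp only [hgdef]
    congr 1
    push_cast
    rw [mul_add, Complex.exp_add]
    have h2 : Complex.exp (Complex.I * (2 * Real.pi)) = 1 := by
      rw [mul_comm]; exact_mod_cast Complex.exp_two_pi_mul_I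
    rw [h2, mul_one]
  have hR := riemann_bound g L hL0 hgc hgLip hper θ0 m hm
  clear_value g
  -- radius comparison
  have hsumdiff : |(∑ k ∈ Finset.range m,
        φ ((r : ℂ) * Complex.exp (Complex.I * (θ0 + 2 * Real.pi * k / m)))) / m -
      (∑ k ∈ Finset.range m, g (θ0 + 2 * Real.pi * k / m)) / m| ≤ L * |r - 1| := by
    rw [div_sub_div_same, ← Finset.sum_sub_distrib, abs_div, abs_of_pos hm', div_le_iff₀ hm']
    calc |∑ k ∈ Finset.range m,
          (φ ((r : ℂ) * Complex.exp (Complex.I * (θ0 + 2 * Real.pi * k / m))) -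
            g (θ0 + 2 * Real.pi * k / m))|
        ≤ ∑ k ∈ Finset.range m,
            |φ ((r : ℂ) * Complex.exp (Complex.I * (θ0 + 2 * Real.pi * k / m))) -
            g (θ0 + 2 * Real.pi * k / m)| := Finset.abs_sum_le_sum_abs _ _
      _ ≤ ∑ k ∈ Finset.range m, L * |r - 1| := by
          apply Finset.sum_le_sum
          intro k _
          have hcast : ((θ0:ℂ) + 2 * Real.pi * k / m) =
              ((θ0 + 2 * Real.pi * k / m : ℝ) : ℂ) := by push_cast; ring
          have habs1 : ‖Complex.exp (Complex.I * ((θ0:ℂ) + 2 * Real.pi * k / m))‖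
              = 1 := by
            rw [hcast, mul_comm Complex.I]; exact Complex.norm_exp_ofReal_mul_I _
          have hgval : g (θ0 + 2 * Real.pi * k / m) =
              φ (Complex.exp (Complex.I * ((θ0:ℂ) + 2 * Real.pi * k / m))) := by
            simp only [hgdef]
            rw [hcast]
          rw [hgval]
          have h1 : ‖(r : ℂ) * Complex.exp (Complex.I * (θ0 + 2 * Real.pi * k / m)) -
              Complex.exp (Complex.I * ((θ0:ℂ) + 2 * Real.pi * k / m))‖ = |r - 1| := by
            rw [show (r : ℂ) * Complex.exp (Complex.I * (θ0 + 2 * Real.pi * k / m)) -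
                Complex.exp (Complex.I * ((θ0:ℂ) + 2 * Real.pi * k / m)) =
                (((r - 1 : ℝ)) : ℂ) * Complex.exp (Complex.I * ((θ0:ℂ) + 2 * Real.pi * k / m)) by
                  push_cast; ring,
              norm_mul, habs1, mul_one, Complex.norm_real, Real.norm_eq_abs]
          calc |φ ((r : ℂ) * Complex.exp (Complex.I * (θ0 + 2 * Real.pi * k / m))) -
              φ (Complex.exp (Complex.I * ((θ0:ℂ) + 2 * Real.pi * k / m)))|
              ≤ L * ‖(r : ℂ) * Complex.exp (Complex.I * (θ0 + 2 * Real.pi * k / m)) -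
                Complex.exp (Complex.I * ((θ0:ℂ) + 2 * Real.pi * k / m))‖ := hLip _ _
            _ = L * |r - 1| := by rw [h1]
      _ = L * |r - 1| * m := by rw [Finset.sum_const, Finset.card_range, nsmul_eq_mul]; ring
  -- bound on |r - 1|
  have hnm : (n : ℝ) ≤ (m : ℝ) := by
    have h1 : n < d ^ n := Nat.lt_pow_self hd
    have h2 : n ≤ m := by omega
    exact_mod_cast h2
  have hn1 : (1:ℝ) ≤ (n:ℝ) := by exact_mod_cast hn
  have hy : p = Real.log (‖a‖) - n * Real.log d := by
    rw [hpdef, Complex.log_re, hbdef, norm_div, norm_pow, Complex.norm_natCast,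
      Real.log_div (norm_ne_zero_iff.mpr ha) (by positivity), Real.log_pow]
  have hyb : |p / m| ≤ K0 * n / m := by
    rw [abs_div, abs_of_pos hm']
    gcongr
    rw [hy]
    calc |Real.log (‖a‖) - n * Real.log d|
        ≤ |Real.log (‖a‖)| + |(n:ℝ) * Real.log d| := abs_sub _ _
      _ = |Real.log (‖a‖)| + n * Real.log d := by
          rw [abs_of_nonneg (mul_nonneg (Nat.cast_nonneg n) hlogd.le)]
      _ ≤ K0 * n := by
          rw [hK0def]
          nlinarith [abs_nonneg (Real.log (‖a‖)), hn1, hlogd.le]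
  have hyb2 : |p / m| ≤ K0 := by
    calc |p / m| ≤ K0 * n / m := hyb
      _ ≤ K0 := by
          rw [div_le_iff₀ hm']
          nlinarith [hK0.le, hnm, hn1]
  have hrb : |r - 1| ≤ Real.exp K0 * (K0 * n / m) := by
    set y : ℝ := p / m with hydef
    have hexpK1 : (1:ℝ) ≤ Real.exp K0 := Real.one_le_exp hK0.le
    have hKnm : (0:ℝ) ≤ K0 * n / m := by positivity
    rcases le_or_gt y 0 with hy0 | hy0
    · have h2 : y + 1 ≤ Real.exp y := Real.add_one_le_exp y
      have h3 : Real.exp y ≤ 1 := Real.exp_le_one_iff.mpr hy0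
      have habs : |r - 1| = 1 - Real.exp y := by
        rw [hrdef, abs_of_nonpos (by linarith)]; ring
      rw [habs]
      have h5 : |y| = -y := abs_of_nonpos hy0
      have h6 : |y| ≤ K0 * n / m := hyb
      calc 1 - Real.exp y ≤ |y| := by rw [h5]; linarith
        _ ≤ K0 * n / m := hyb
        _ ≤ Real.exp K0 * (K0 * n / m) := le_mul_of_one_le_left hKnm hexpK1
    · have h2 : -y + 1 ≤ Real.exp (-y) := Real.add_one_le_exp (-y)
      have h3 : Real.exp (-y) = (Real.exp y)⁻¹ := Real.exp_neg y
      have hey : 0 < Real.exp y := Real.exp_pos y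
      have h4 : Real.exp y - 1 ≤ y * Real.exp y := by
        rw [h3] at h2
        have h2' := mul_le_mul_of_nonneg_right h2 hey.le
        rw [inv_mul_cancel₀ hey.ne'] at h2'
        ring_nf at h2' ⊢
        linarith
      have h5 : Real.exp y ≤ Real.exp K0 :=
        Real.exp_le_exp.mpr ((le_abs_self y).trans hyb2)
      have habs : |r - 1| = Real.exp y - 1 := by
        rw [hrdef, abs_of_nonneg]
        have := Real.add_one_le_exp y; linarith
      rw [habs]
      have h7 : y ≤ K0 * n / m := (le_abs_self y).trans hyb
      calc Real.exp y - 1 ≤ y * Real.exp y := h4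
        _ ≤ (K0 * n / m) * Real.exp K0 := mul_le_mul h7 h5 hey.le hKnm
        _ = Real.exp K0 * (K0 * n / m) := by ring
  -- assemble
  rw [hsum, hcastm]
  have hπ : (0:ℝ) < Real.pi := Real.pi_pos
  have hdm : (d:ℝ) ^ n ≤ 2 * m := by rw [← hcastm]; linarith
  calc |(∑ k ∈ Finset.range m,
          φ ((r : ℂ) * Complex.exp (Complex.I * (θ0 + 2 * Real.pi * k / m)))) / m -
        (2 * Real.pi)⁻¹ * ∫ t in (0:ℝ)..(2 * Real.pi), g t|
      ≤ |(∑ k ∈ Finset.range m,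
          φ ((r : ℂ) * Complex.exp (Complex.I * (θ0 + 2 * Real.pi * k / m)))) / m -
          (∑ k ∈ Finset.range m, g (θ0 + 2 * Real.pi * k / m)) / m| +
        |(∑ k ∈ Finset.range m, g (θ0 + 2 * Real.pi * k / m)) / m -
          (2 * Real.pi)⁻¹ * ∫ t in (0:ℝ)..(2 * Real.pi), g t| := abs_sub_le _ _ _
    _ ≤ L * |r - 1| + 2 * Real.pi * L / m := add_le_add hsumdiff hR
    _ ≤ (L + 1) * (Real.exp K0 * K0 + 2 * Real.pi) * n / m := by
        have e2 : L * |r - 1| ≤ (L + 1) * (Real.exp K0 * (K0 * n / m)) :=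
          mul_le_mul (by linarith) hrb (abs_nonneg _) (by positivity)
        have e3 : 2 * Real.pi * L / m ≤ (L + 1) * (2 * Real.pi) * n / m := by
          rw [div_le_div_iff_of_pos_right hm']
          have t1 : L * 1 ≤ (L + 1) * n :=
            mul_le_mul (by linarith) hn1 zero_le_one (by linarith)
          have t2 := mul_le_mul_of_nonneg_left t1 (by positivity : (0:ℝ) ≤ 2 * Real.pi)
          linarith [t2]
        calc L * |r - 1| + 2 * Real.pi * L / m
            ≤ (L + 1) * (Real.exp K0 * (K0 * n / m)) + (L + 1) * (2 * Real.pi) * n / m :=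
              add_le_add e2 e3
          _ = (L + 1) * (Real.exp K0 * K0 + 2 * Real.pi) * n / m := by ring
    _ ≤ 2 * (L + 1) * (Real.exp K0 * K0 + 2 * Real.pi) * n / (d:ℝ) ^ n := by
        rw [div_le_div_iff₀ hm' hdnR]
        have hA : (0:ℝ) ≤ (L + 1) * (Real.exp K0 * K0 + 2 * Real.pi) * n := by positivity
        linarith [mul_le_mul_of_nonneg_left hdm hA]
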